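/- Let r₀ > 0 and let u : ℝ → ℝ be strictly positive on (0, r₀], lower semicontinuous on (0, r₀] (as a function on that set), and Lebesgue integrable on [a, r₀] for every a ∈ (0, r₀). Then there exists w : ℝ → ℝ that is continuous on (0, r₀], satisfies 0 < w t ≤ u t for every t ∈ (0, r₀], and such that the function u − w is Lebesgue integrable on (0, r₀). -/

import Mathlib

open Set MeasureTheory

open Filter Topology

noncomputable def Faux (r₀ : ℝ) (u : ℝ → ℝ) (c x : ℝ) : ℝ :=
  ⨅ y : (Set.Ioc (0:ℝ) r₀), (u y + c * |x - y.1|)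

noncomputable def phiAux (r₀ : ℝ) (m : ℕ) (t : ℝ) : ℝ :=
  max 0 (min 1 ((r₀ / 2 ^ m - t) / (r₀ / 2 ^ m - r₀ / 2 ^ (m + 1))))

noncomputable def hAux (r₀ : ℝ) (K : ℕ → ℕ) (t : ℝ) : ℝ :=
  (K 0 : ℝ) + ∑' m, ((K (m + 1) : ℝ) - (K m : ℝ)) * phiAux r₀ m t

section lemmas
variable {r₀ : ℝ} {u : ℝ → ℝ}

lemma Faux_bdd (hr₀ : 0 < r₀) (hu_pos : ∀ t ∈ Ioc (0:ℝ) r₀, 0 < u t)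
    {c : ℝ} (hc : 0 ≤ c) (x : ℝ) :
    BddBelow (Set.range fun y : Set.Ioc (0:ℝ) r₀ => u y + c * |x - y.1|) := by
  refine ⟨0, ?_⟩
  rintro z ⟨y, rfl⟩
  have := hu_pos y y.2
  positivity

lemma Faux_nonneg (hr₀ : 0 < r₀) (hu_pos : ∀ t ∈ Ioc (0:ℝ) r₀, 0 < u t)
    {c : ℝ} (hc : 0 ≤ c) (x : ℝ) : 0 ≤ Faux r₀ u c x := by
  haveI : Nonempty (Set.Ioc (0:ℝ) r₀) := ⟨⟨r₀, hr₀, le_rfl⟩⟩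
  refine le_ciInf fun y => ?_
  have := hu_pos y y.2
  positivity

lemma Faux_le (hr₀ : 0 < r₀) (hu_pos : ∀ t ∈ Ioc (0:ℝ) r₀, 0 < u t)
    {c : ℝ} (hc : 0 ≤ c) {x : ℝ} (hx : x ∈ Ioc (0:ℝ) r₀) : Faux r₀ u c x ≤ u x := by
  have h := ciInf_le (Faux_bdd hr₀ hu_pos hc x) (⟨x, hx⟩ : Set.Ioc (0:ℝ) r₀)
  simpa [Faux] using h

lemma Faux_mono (hr₀ : 0 < r₀) (hu_pos : ∀ t ∈ Ioc (0:ℝ) r₀, 0 < u t)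
    {c c' : ℝ} (hc : 0 ≤ c) (hcc : c ≤ c') (x : ℝ) :
    Faux r₀ u c x ≤ Faux r₀ u c' x := by
  refine ciInf_mono (Faux_bdd hr₀ hu_pos hc x) fun y => ?_
  have : c * |x - y.1| ≤ c' * |x - y.1| := by
    apply mul_le_mul_of_nonneg_right hcc (abs_nonneg _)
  linarith

lemma Faux_est (hr₀ : 0 < r₀) (hu_pos : ∀ t ∈ Ioc (0:ℝ) r₀, 0 < u t)
    {c c' : ℝ} (hc : 0 ≤ c) (hc' : 0 ≤ c') (x x' : ℝ) :
    Faux r₀ u c x ≤ Faux r₀ u c' x' + |c - c'| * (|x'| + r₀) + c * |x - x'| := by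
  haveI : Nonempty (Set.Ioc (0:ℝ) r₀) := ⟨⟨r₀, hr₀, le_rfl⟩⟩
  rw [← sub_le_iff_le_add, ← sub_le_iff_le_add]
  refine le_ciInf fun y => ?_
  rw [sub_le_iff_le_add, sub_le_iff_le_add]
  have h1 : Faux r₀ u c x ≤ u y + c * |x - y.1| :=
    ciInf_le (Faux_bdd hr₀ hu_pos hc x) y
  have hy : |y.1| ≤ r₀ := by
    rcases y.2 with ⟨h0, hle⟩
    rw [abs_of_pos h0]; exact hle
  have h2 : |x - y.1| ≤ |x' - y.1| + |x - x'| := by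
    calc |x - y.1| = |(x - x') + (x' - y.1)| := by ring_nf
    _ ≤ |x - x'| + |x' - y.1| := abs_add_le _ _
    _ = |x' - y.1| + |x - x'| := by ring
  have h3 : c * |x' - y.1| ≤ c' * |x' - y.1| + |c - c'| * |x' - y.1| := by
    have : c ≤ c' + |c - c'| := by
      rcases abs_cases (c - c') with ⟨h, _⟩ | ⟨h, _⟩ <;> linarith
    nlinarith [abs_nonneg (x' - y.1)]
  have h4 : |x' - y.1| ≤ |x'| + r₀ := by
    calc |x' - y.1| ≤ |x'| + |y.1| := abs_sub _ _
    _ ≤ |x'| + r₀ := by linarith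
  have h5 : |c - c'| * |x' - y.1| ≤ |c - c'| * (|x'| + r₀) :=
    mul_le_mul_of_nonneg_left h4 (abs_nonneg _)
  have h6 : c * |x - x'| ≥ 0 := by positivity
  nlinarith [mul_le_mul_of_nonneg_left h2 hc]

lemma Faux_cont (hr₀ : 0 < r₀) (hu_pos : ∀ t ∈ Ioc (0:ℝ) r₀, 0 < u t)
    {c : ℝ} (hc : 0 ≤ c) : Continuous (Faux r₀ u c) := by
  refine (LipschitzWith.of_dist_le_mul (K := c.toNNReal) fun x x' => ?_).continuous
  have h1 := Faux_est hr₀ hu_pos hc hc x x'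
  have h2 := Faux_est hr₀ hu_pos hc hc x' x
  simp only [sub_self, abs_zero, zero_mul, add_zero, zero_add] at h1 h2
  rw [Real.dist_eq, Real.dist_eq, Real.coe_toNNReal _ hc]
  rw [abs_sub_le_iff]
  constructor
  · have : |x' - x| = |x - x'| := abs_sub_comm _ _
    linarith
  · rw [abs_sub_comm x' x] at h2
    linarith

lemma Faux_lower (hr₀ : 0 < r₀) (hu_pos : ∀ t ∈ Ioc (0:ℝ) r₀, 0 < u t)
    (hu_lsc : LowerSemicontinuousOn u (Ioc 0 r₀))
    {t : ℝ} (ht : t ∈ Ioc (0:ℝ) r₀) {ε : ℝ} (hε : 0 < ε) :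
    ∃ δ > 0, ∀ c, 0 ≤ c → min (u t - ε) (c * δ) ≤ Faux r₀ u c t := by
  haveI : Nonempty (Set.Ioc (0:ℝ) r₀) := ⟨⟨r₀, hr₀, le_rfl⟩⟩
  have hev : ∀ᶠ x in nhdsWithin t (Ioc 0 r₀), u t - ε < u x :=
    hu_lsc t ht (u t - ε) (by linarith)
  obtain ⟨δ, hδ, hball⟩ := Metric.mem_nhdsWithin_iff.1 hev
  refine ⟨δ, hδ, fun c hc => le_ciInf fun y => ?_⟩
  by_cases hyd : dist y.1 t < δ
  · have hy : u t - ε < u y.1 := hball ⟨Metric.mem_ball.2 hyd, y.2⟩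
    have h0 : 0 ≤ c * |t - y.1| := by positivity
    calc min (u t - ε) (c * δ) ≤ u t - ε := min_le_left _ _
      _ ≤ u y.1 + c * |t - y.1| := by linarith
  · push_neg at hyd
    have h1 : δ ≤ |t - y.1| := by
      rw [abs_sub_comm]
      exact hyd.trans_eq (Real.dist_eq _ _)
    have h2 : c * δ ≤ c * |t - y.1| := mul_le_mul_of_nonneg_left h1 hc
    have h3 : 0 < u y.1 := hu_pos y.1 y.2
    calc min (u t - ε) (c * δ) ≤ c * δ := min_le_right _ _
      _ ≤ u y.1 + c * |t - y.1| := by linarith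

lemma Faux_pos (hr₀ : 0 < r₀) (hu_pos : ∀ t ∈ Ioc (0:ℝ) r₀, 0 < u t)
    (hu_lsc : LowerSemicontinuousOn u (Ioc 0 r₀))
    {t : ℝ} (ht : t ∈ Ioc (0:ℝ) r₀) {c : ℝ} (hc : 1 ≤ c) :
    0 < Faux r₀ u c t := by
  have hut : 0 < u t := hu_pos t ht
  obtain ⟨δ, hδ, hlow⟩ := Faux_lower hr₀ hu_pos hu_lsc ht (ε := u t / 2) (by linarith)
  refine lt_of_lt_of_le ?_ (hlow c (by linarith))
  have : (1:ℝ) * δ ≤ c * δ := mul_le_mul_of_nonneg_right hc hδ.le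
  refine lt_min (by linarith) (by linarith)

lemma Faux_tendsto (hr₀ : 0 < r₀) (hu_pos : ∀ t ∈ Ioc (0:ℝ) r₀, 0 < u t)
    (hu_lsc : LowerSemicontinuousOn u (Ioc 0 r₀))
    {t : ℝ} (ht : t ∈ Ioc (0:ℝ) r₀) :
    Tendsto (fun n : ℕ => Faux r₀ u n t) atTop (𝓝 (u t)) := by
  rw [Metric.tendsto_atTop]
  intro ε hε
  obtain ⟨δ, hδ, hlow⟩ := Faux_lower hr₀ hu_pos hu_lsc ht (ε := ε / 2) (by linarith)
  refine ⟨⌈u t / δ⌉₊, fun n hn => ?_⟩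
  have h1 : u t / δ ≤ (n : ℝ) := (Nat.le_ceil _).trans (by exact_mod_cast hn)
  have h2 : u t ≤ (n : ℝ) * δ := by
    rw [div_le_iff₀ hδ] at h1
    linarith
  have h3 := hlow n (by positivity)
  have h4 : min (u t - ε / 2) ((n:ℝ) * δ) = u t - ε / 2 :=
    min_eq_left (by linarith)
  rw [h4] at h3
  have h5 : Faux r₀ u n t ≤ u t := Faux_le hr₀ hu_pos (by positivity) ht
  rw [Real.dist_eq, abs_sub_lt_iff]
  constructor <;> linarith

lemma phiAux_cont (r₀ : ℝ) (m : ℕ) : Continuous (phiAux r₀ m) := by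
  unfold phiAux; fun_prop

lemma phiAux_nonneg (r₀ : ℝ) (m : ℕ) (t : ℝ) : 0 ≤ phiAux r₀ m t := le_max_left _ _

lemma phiAux_le_one (r₀ : ℝ) (m : ℕ) (t : ℝ) : phiAux r₀ m t ≤ 1 := by
  unfold phiAux
  exact max_le zero_le_one (min_le_left _ _)

lemma phiAux_eq_one (hr₀ : 0 < r₀) {m : ℕ} {t : ℝ} (h : t ≤ r₀ / 2 ^ (m + 1)) :
    phiAux r₀ m t = 1 := by
  have hden : r₀ / 2 ^ m - r₀ / 2 ^ (m + 1) = r₀ / 2 ^ (m + 1) := by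
    rw [pow_succ]; field_simp; ring
  have hdpos : 0 < r₀ / 2 ^ (m + 1) := by positivity
  have h1 : (1:ℝ) ≤ (r₀ / 2 ^ m - t) / (r₀ / 2 ^ m - r₀ / 2 ^ (m + 1)) := by
    rw [hden, le_div_iff₀ hdpos, one_mul]
    have := hden
    linarith
  unfold phiAux
  rw [min_eq_left h1, max_eq_right zero_le_one]

lemma phiAux_eq_zero (hr₀ : 0 < r₀) {m : ℕ} {t : ℝ} (h : r₀ / 2 ^ m ≤ t) :
    phiAux r₀ m t = 0 := by
  have hden : r₀ / 2 ^ m - r₀ / 2 ^ (m + 1) = r₀ / 2 ^ (m + 1) := by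
    rw [pow_succ]; field_simp; ring
  have hdpos : 0 < r₀ / 2 ^ (m + 1) := by positivity
  have h1 : (r₀ / 2 ^ m - t) / (r₀ / 2 ^ m - r₀ / 2 ^ (m + 1)) ≤ 0 := by
    rw [hden]
    apply div_nonpos_of_nonpos_of_nonneg (by linarith) hdpos.le
  unfold phiAux
  rw [max_eq_left ((min_le_right _ _).trans h1)]

lemma hAux_eq_sum (hr₀ : 0 < r₀) (K : ℕ → ℕ) {N : ℕ} {t : ℝ} (h : r₀ / 2 ^ N < t) :
    hAux r₀ K t = (K 0 : ℝ) + ∑ m ∈ Finset.range N, ((K (m+1) : ℝ) - (K m : ℝ)) * phiAux r₀ m t := by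
  unfold hAux
  congr 1
  refine tsum_eq_sum fun m hm => ?_
  rw [Finset.mem_range, not_lt] at hm
  have h2 : r₀ / 2 ^ m ≤ r₀ / 2 ^ N := by
    apply div_le_div_of_nonneg_left hr₀.le (by positivity)
    exact pow_le_pow_right₀ one_le_two hm
  rw [phiAux_eq_zero hr₀ (h2.trans h.le), mul_zero]

lemma exists_pow_lt_aux (hr₀ : 0 < r₀) {t : ℝ} (ht : 0 < t) : ∃ N : ℕ, r₀ / 2 ^ N < t := by
  have h1 : Tendsto (fun N : ℕ => r₀ * (1/2 : ℝ) ^ N) atTop (𝓝 (r₀ * 0)) :=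
    (tendsto_pow_atTop_nhds_zero_of_lt_one (by norm_num) (by norm_num)).const_mul r₀
  rw [mul_zero] at h1
  have h2 := h1.eventually (gt_mem_nhds ht)
  obtain ⟨N, hN⟩ := h2.exists
  refine ⟨N, ?_⟩
  have : r₀ * (1/2 : ℝ) ^ N = r₀ / 2 ^ N := by
    rw [div_pow, one_pow]; ring
  linarith [this ▸ hN]

lemma hAux_continuousAt (hr₀ : 0 < r₀) (K : ℕ → ℕ) {t : ℝ} (ht : 0 < t) :
    ContinuousAt (hAux r₀ K) t := by
  obtain ⟨N, hN⟩ := exists_pow_lt_aux hr₀ ht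
  have hcont : Continuous fun s => (K 0 : ℝ) +
      ∑ m ∈ Finset.range N, ((K (m+1) : ℝ) - (K m : ℝ)) * phiAux r₀ m s := by
    refine continuous_const.add (continuous_finset_sum _ fun m _ => ?_)
    exact continuous_const.mul (phiAux_cont r₀ m)
  refine hcont.continuousAt.congr ?_
  have hopen : IsOpen {s : ℝ | r₀ / 2 ^ N < s} := isOpen_lt continuous_const continuous_id
  filter_upwards [hopen.mem_nhds hN] with s hs
  exact (hAux_eq_sum hr₀ K hs).symm

lemma hAux_ge (hr₀ : 0 < r₀) {K : ℕ → ℕ} (hK : Monotone K) {n : ℕ} {t : ℝ}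
    (ht : 0 < t) (htn : t ≤ r₀ / 2 ^ n) : (K n : ℝ) ≤ hAux r₀ K t := by
  obtain ⟨N, hN⟩ := exists_pow_lt_aux hr₀ ht
  have hnN : n ≤ N := by
    by_contra hcon
    push_neg at hcon
    have : r₀ / 2 ^ n ≤ r₀ / 2 ^ N := by
      apply div_le_div_of_nonneg_left hr₀.le (by positivity)
      exact pow_le_pow_right₀ one_le_two hcon.le
    linarith
  rw [hAux_eq_sum hr₀ K hN]
  have hterm : ∀ m, 0 ≤ ((K (m+1) : ℝ) - (K m : ℝ)) * phiAux r₀ m t := fun m => by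
    have h1 : (K m : ℝ) ≤ K (m+1) := by exact_mod_cast hK (Nat.le_succ m)
    have := phiAux_nonneg r₀ m t
    nlinarith
  have hsub : ∑ m ∈ Finset.range n, ((K (m+1) : ℝ) - (K m : ℝ)) * phiAux r₀ m t ≤
      ∑ m ∈ Finset.range N, ((K (m+1) : ℝ) - (K m : ℝ)) * phiAux r₀ m t :=
    Finset.sum_le_sum_of_subset_of_nonneg (Finset.range_subset_range.2 hnN)
      (fun m _ _ => hterm m)
  have heq : ∑ m ∈ Finset.range n, ((K (m+1) : ℝ) - (K m : ℝ)) * phiAux r₀ m t =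
      (K n : ℝ) - (K 0 : ℝ) := by
    rw [← Finset.sum_range_sub (fun i => (K i : ℝ))]
    refine Finset.sum_congr rfl fun m hm => ?_
    rw [Finset.mem_range] at hm
    have hm1 : m + 1 ≤ n := hm
    have h2 : r₀ / 2 ^ n ≤ r₀ / 2 ^ (m + 1) := by
      apply div_le_div_of_nonneg_left hr₀.le (by positivity)
      exact pow_le_pow_right₀ one_le_two hm1
    rw [phiAux_eq_one hr₀ (htn.trans h2), mul_one]
  linarith

lemma hAux_ge_zero (hr₀ : 0 < r₀) {K : ℕ → ℕ} (hK : Monotone K) {t : ℝ}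
    (ht : 0 < t) (htr : t ≤ r₀) : (K 0 : ℝ) ≤ hAux r₀ K t :=
  hAux_ge hr₀ hK (n := 0) ht (by simpa using htr)

end lemmas

theorem continuous_integrable_minorant
    (r₀ : ℝ) (hr₀ : 0 < r₀) (u : ℝ → ℝ)
    (hu_pos : ∀ t ∈ Ioc (0:ℝ) r₀, 0 < u t)
    (hu_lsc : LowerSemicontinuousOn u (Ioc 0 r₀))
    (hu_int : ∀ a ∈ Ioo (0:ℝ) r₀, IntegrableOn u (Icc a r₀)) :
    ∃ w : ℝ → ℝ, ContinuousOn w (Ioc 0 r₀) ∧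
      (∀ t ∈ Ioc (0:ℝ) r₀, 0 < w t ∧ w t ≤ u t) ∧
      IntegrableOn (fun t => u t - w t) (Ioo 0 r₀) := by
  haveI : Nonempty (Set.Ioc (0:ℝ) r₀) := ⟨⟨r₀, hr₀, le_rfl⟩⟩
  have hmemIoo : ∀ n : ℕ, r₀ / 2 ^ (n + 1) ∈ Ioo (0:ℝ) r₀ := by
    intro n
    constructor
    · positivity
    · apply div_lt_self hr₀
      exact one_lt_pow₀ one_lt_two (Nat.succ_ne_zero n)
  -- integrability of u - Faux c on compacts
  have hFint : ∀ (c : ℝ), 0 ≤ c → ∀ a ∈ Ioo (0:ℝ) r₀,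
      IntegrableOn (fun x => u x - Faux r₀ u c x) (Icc a r₀) := by
    intro c hc a ha
    exact (hu_int a ha).sub
      ((Faux_cont hr₀ hu_pos hc).continuousOn.integrableOn_compact isCompact_Icc)
  have hIccS : ∀ a ∈ Ioo (0:ℝ) r₀, Icc a r₀ ⊆ Ioc (0:ℝ) r₀ := by
    intro a ha x hx
    exact ⟨lt_of_lt_of_le ha.1 hx.1, hx.2⟩
  -- dominated convergence
  have hItendsto : ∀ a ∈ Ioo (0:ℝ) r₀,
      Tendsto (fun n : ℕ => ∫ x in Icc a r₀, (u x - Faux r₀ u n x)) atTop (𝓝 0) := by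
    intro a ha
    have h0 : (0:ℝ) = ∫ x in Icc a r₀, (0:ℝ) := by simp
    rw [h0]
    apply tendsto_integral_of_dominated_convergence (bound := fun x => u x)
    · intro n
      exact ((hu_int a ha).aestronglyMeasurable.sub
        (Faux_cont hr₀ hu_pos (n.cast_nonneg)).aestronglyMeasurable.restrict)
    · exact hu_int a ha
    · intro n
      filter_upwards [ae_restrict_mem measurableSet_Icc] with x hx
      have hxS : x ∈ Ioc (0:ℝ) r₀ := hIccS a ha hx
      have h1 : 0 ≤ Faux r₀ u n x := Faux_nonneg hr₀ hu_pos (n.cast_nonneg) x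
      have h2 : Faux r₀ u n x ≤ u x := Faux_le hr₀ hu_pos (n.cast_nonneg) hxS
      rw [Real.norm_eq_abs, abs_of_nonneg (by linarith)]
      linarith
    · filter_upwards [ae_restrict_mem measurableSet_Icc] with x hx
      have hxS : x ∈ Ioc (0:ℝ) r₀ := hIccS a ha hx
      have := (tendsto_const_nhds (x := u x) (f := atTop (α := ℕ))).sub
        (Faux_tendsto hr₀ hu_pos hu_lsc hxS)
      simpa using this
  -- choice of constants
  have hch : ∀ n : ℕ, ∃ m : ℕ,
      ∫ x in Icc (r₀ / 2 ^ (n + 1)) r₀, (u x - Faux r₀ u m x) ≤ (2:ℝ)⁻¹ ^ n := by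
    intro n
    have h := (hItendsto _ (hmemIoo n)).eventually
      (gt_mem_nhds (show (0:ℝ) < 2⁻¹ ^ n by positivity))
    obtain ⟨m, hm⟩ := h.exists
    exact ⟨m, hm.le⟩
  choose k hk using hch
  set K : ℕ → ℕ := fun n => 1 + ∑ i ∈ Finset.range (n + 1), k i with hKdef
  have hKmono : Monotone K := by
    intro m n hmn
    simp only [hKdef]
    have : ∀ i ∈ Finset.range (m+1), i ∈ Finset.range (n+1) := by
      intro i hi
      rw [Finset.mem_range] at *
      omega
    exact Nat.add_le_add_left (Finset.sum_le_sum_of_subset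
      (fun i hi => this i hi)) 1
  have hKge : ∀ n, k n ≤ K n := by
    intro n
    simp only [hKdef]
    have : k n ≤ ∑ i ∈ Finset.range (n + 1), k i :=
      Finset.single_le_sum (fun i _ => Nat.zero_le _) (Finset.self_mem_range_succ n)
    omega
  have hK1 : ∀ n, 1 ≤ K n := fun n => Nat.le_add_right 1 _
  -- the minorant
  set w : ℝ → ℝ := fun t => Faux r₀ u (hAux r₀ K t) t with hwdef
  have hh1 : ∀ t ∈ Ioc (0:ℝ) r₀, (1:ℝ) ≤ hAux r₀ K t := by
    intro t ht
    calc (1:ℝ) ≤ (K 0 : ℝ) := by exact_mod_cast hK1 0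
    _ ≤ hAux r₀ K t := hAux_ge_zero hr₀ hKmono ht.1 ht.2
  have hh0 : ∀ t ∈ Ioc (0:ℝ) r₀, (0:ℝ) ≤ hAux r₀ K t :=
    fun t ht => zero_le_one.trans (hh1 t ht)
  -- bounds
  have hwb : ∀ t ∈ Ioc (0:ℝ) r₀, 0 < w t ∧ w t ≤ u t := by
    intro t ht
    exact ⟨Faux_pos hr₀ hu_pos hu_lsc ht (hh1 t ht),
      Faux_le hr₀ hu_pos (hh0 t ht) ht⟩
  -- continuity
  have hwcont : ContinuousOn w (Ioc 0 r₀) := by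
    intro t ht
    have hhc : ContinuousWithinAt (hAux r₀ K) (Ioc 0 r₀) t :=
      (hAux_continuousAt hr₀ K ht.1).continuousWithinAt
    have hdistb : ∀ t' ∈ Ioc (0:ℝ) r₀, dist (w t') (w t) ≤
        2 * r₀ * |hAux r₀ K t' - hAux r₀ K t| +
          (hAux r₀ K t + hAux r₀ K t') * |t' - t| := by
      intro t' ht'
      have e1 := Faux_est hr₀ hu_pos (hh0 t' ht') (hh0 t ht) t' t
      have e2 := Faux_est hr₀ hu_pos (hh0 t ht) (hh0 t' ht') t t'
      have habs : |t| ≤ r₀ := by rw [abs_of_pos ht.1]; exact ht.2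
      have habs' : |t'| ≤ r₀ := by rw [abs_of_pos ht'.1]; exact ht'.2
      rw [abs_sub_comm (hAux r₀ K t) (hAux r₀ K t'),
        abs_sub_comm t t'] at e2
      rw [Real.dist_eq, abs_sub_le_iff]
      have hn1 := abs_nonneg (hAux r₀ K t' - hAux r₀ K t)
      have hn2 := abs_nonneg (t' - t)
      have hA := hh0 t ht
      have hB := hh0 t' ht'
      constructor
      · nlinarith
      · nlinarith
    have hb : ContinuousWithinAt (fun t' =>
        2 * r₀ * |hAux r₀ K t' - hAux r₀ K t| +
          (hAux r₀ K t + hAux r₀ K t') * |t' - t|) (Ioc 0 r₀) t := by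
      apply ContinuousWithinAt.add
      · exact continuousWithinAt_const.mul
          ((hhc.sub continuousWithinAt_const).abs)
      · exact (continuousWithinAt_const.add hhc).mul
          ((continuousWithinAt_id.sub continuousWithinAt_const).abs)
    have hb0 : Tendsto (fun t' =>
        2 * r₀ * |hAux r₀ K t' - hAux r₀ K t| +
          (hAux r₀ K t + hAux r₀ K t') * |t' - t|) (nhdsWithin t (Ioc 0 r₀)) (𝓝 0) := by
      have := hb
      unfold ContinuousWithinAt at this
      simpa using this
    rw [ContinuousWithinAt, tendsto_iff_dist_tendsto_zero]
    apply squeeze_zero' (Filter.Eventually.of_forall fun t' => dist_nonneg) ?_ hb0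
    filter_upwards [self_mem_nhdsWithin] with t' ht'
    exact hdistb t' ht'
  -- integrability
  have hcoverIoc : Ioc (0:ℝ) r₀ ⊆ ⋃ n : ℕ, Icc (r₀ / 2 ^ (n + 1)) r₀ := by
    intro t ht
    obtain ⟨N, hN⟩ := exists_pow_lt_aux hr₀ ht.1
    refine mem_iUnion.2 ⟨N, ?_, ht.2⟩
    have : r₀ / 2 ^ (N + 1) ≤ r₀ / 2 ^ N := by
      apply div_le_div_of_nonneg_left hr₀.le (by positivity)
      exact pow_le_pow_right₀ one_le_two (Nat.le_succ N)
    linarith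
  have hmeasu : AEStronglyMeasurable u (volume.restrict (Ioo (0:ℝ) r₀)) := by
    have h1 : AEStronglyMeasurable u
        (volume.restrict (⋃ n : ℕ, Icc (r₀ / 2 ^ (n + 1)) r₀)) := by
      rw [aestronglyMeasurable_iUnion_iff]
      exact fun n => (hu_int _ (hmemIoo n)).aestronglyMeasurable
    exact h1.mono_measure (Measure.restrict_mono
      ((Ioo_subset_Ioc_self).trans hcoverIoc) le_rfl)
  have hmeasw : AEStronglyMeasurable w (volume.restrict (Ioo (0:ℝ) r₀)) :=
    (hwcont.aestronglyMeasurable measurableSet_Ioc).mono_measure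
      (Measure.restrict_mono Ioo_subset_Ioc_self le_rfl)
  refine ⟨w, hwcont, hwb, (hmeasu.sub hmeasw), ?_⟩
  -- finite integral
  have hPn : ∀ n : ℕ, Icc (r₀ / 2 ^ (n + 1)) (r₀ / 2 ^ n) ⊆ Ioc (0:ℝ) r₀ := by
    intro n x hx
    refine ⟨lt_of_lt_of_le (hmemIoo n).1 hx.1, hx.2.trans ?_⟩
    apply div_le_self hr₀.le
    simpa using pow_le_pow_right₀ one_le_two (Nat.zero_le _)
  have hcoverP : Ioo (0:ℝ) r₀ ⊆ ⋃ n : ℕ, Icc (r₀ / 2 ^ (n + 1)) (r₀ / 2 ^ n) := by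
    intro t ht
    obtain ⟨N, hN⟩ := exists_pow_lt_aux hr₀ ht.1
    have hex : ∃ m : ℕ, r₀ / 2 ^ m < t := ⟨N, hN⟩
    have h0 : ¬ (r₀ / 2 ^ 0 < t) := by
      simp only [pow_zero, div_one]
      exact not_lt.2 ht.2.le
    set n := Nat.find hex with hn
    have hfind : r₀ / 2 ^ n < t := Nat.find_spec hex
    have hne : n ≠ 0 := by
      intro hcon
      rw [hcon] at hfind
      exact h0 hfind
    obtain ⟨m, hm⟩ := Nat.exists_eq_succ_of_ne_zero hne
    refine mem_iUnion.2 ⟨m, ?_, ?_⟩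
    · rw [← Nat.succ_eq_add_one, ← hm]
      exact hfind.le
    · have := Nat.find_min hex (m := m) (by omega)
      exact not_lt.1 this
  rw [HasFiniteIntegral]
  have hfnn : ∀ t ∈ Ioo (0:ℝ) r₀, 0 ≤ u t - w t := by
    intro t ht
    have := (hwb t (Ioo_subset_Ioc_self ht)).2
    linarith
  have heq1 : ∫⁻ t in Ioo (0:ℝ) r₀, ‖u t - w t‖ₑ =
      ∫⁻ t in Ioo (0:ℝ) r₀, ENNReal.ofReal (u t - w t) := by
    apply setLIntegral_congr_fun measurableSet_Ioo
    intro t ht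
    exact Real.enorm_eq_ofReal (hfnn t ht)
  rw [heq1]
  have hbound : ∫⁻ t in Ioo (0:ℝ) r₀, ENNReal.ofReal (u t - w t) ≤
      ∑' n : ℕ, ENNReal.ofReal ((2:ℝ)⁻¹ ^ n) := by
    calc ∫⁻ t in Ioo (0:ℝ) r₀, ENNReal.ofReal (u t - w t)
        ≤ ∫⁻ t in ⋃ n : ℕ, Icc (r₀ / 2 ^ (n + 1)) (r₀ / 2 ^ n),
            ENNReal.ofReal (u t - w t) := lintegral_mono_set hcoverP
      _ ≤ ∑' n : ℕ, ∫⁻ t in Icc (r₀ / 2 ^ (n + 1)) (r₀ / 2 ^ n),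
            ENNReal.ofReal (u t - w t) := lintegral_iUnion_le _ _
      _ ≤ ∑' n : ℕ, ENNReal.ofReal ((2:ℝ)⁻¹ ^ n) := by
          apply ENNReal.tsum_le_tsum
          intro n
          calc ∫⁻ t in Icc (r₀ / 2 ^ (n + 1)) (r₀ / 2 ^ n),
                ENNReal.ofReal (u t - w t)
              ≤ ∫⁻ t in Icc (r₀ / 2 ^ (n + 1)) (r₀ / 2 ^ n),
                ENNReal.ofReal (u t - Faux r₀ u (k n) t) := by
                apply lintegral_mono_ae
                filter_upwards [ae_restrict_mem measurableSet_Icc] with t htP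
                have htS : t ∈ Ioc (0:ℝ) r₀ := hPn n htP
                have hge : (K n : ℝ) ≤ hAux r₀ K t :=
                  hAux_ge hr₀ hKmono htS.1 htP.2
                have hkK : ((k n : ℕ) : ℝ) ≤ (K n : ℝ) := by exact_mod_cast hKge n
                have h1 : Faux r₀ u (k n) t ≤ Faux r₀ u (K n) t :=
                  Faux_mono hr₀ hu_pos ((k n).cast_nonneg) hkK t
                have h2 : Faux r₀ u (K n) t ≤ Faux r₀ u (hAux r₀ K t) t :=
                  Faux_mono hr₀ hu_pos ((K n).cast_nonneg) hge t
                apply ENNReal.ofReal_le_ofReal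
                simp only [hwdef]
                linarith
            _ ≤ ∫⁻ t in Icc (r₀ / 2 ^ (n + 1)) r₀,
                ENNReal.ofReal (u t - Faux r₀ u (k n) t) := by
                apply lintegral_mono_set
                apply Icc_subset_Icc_right
                apply div_le_self hr₀.le
                simpa using pow_le_pow_right₀ one_le_two (Nat.zero_le _)
            _ = ENNReal.ofReal (∫ t in Icc (r₀ / 2 ^ (n + 1)) r₀,
                (u t - Faux r₀ u (k n) t)) := by
                rw [← ofReal_integral_eq_lintegral_ofReal
                  (hFint (k n) ((k n).cast_nonneg) _ (hmemIoo n)) ?_]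
                filter_upwards [ae_restrict_mem measurableSet_Icc] with t htI
                have htS : t ∈ Ioc (0:ℝ) r₀ := hIccS _ (hmemIoo n) htI
                have := Faux_le hr₀ hu_pos (c := ((k n : ℕ) : ℝ))
                  ((k n).cast_nonneg) htS
                simp only [Pi.zero_apply]
                linarith
            _ ≤ ENNReal.ofReal ((2:ℝ)⁻¹ ^ n) := ENNReal.ofReal_le_ofReal (hk n)
  refine lt_of_le_of_lt hbound ?_
  have hsum : ∑' n : ℕ, ENNReal.ofReal ((2:ℝ)⁻¹ ^ n) =
      (1 - ENNReal.ofReal 2⁻¹)⁻¹ := by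
    rw [← ENNReal.tsum_geometric]
    congr 1
    ext n
    rw [ENNReal.ofReal_pow (by norm_num)]
  rw [hsum]
  apply ENNReal.inv_lt_top.2
  have hlt : ENNReal.ofReal 2⁻¹ < 1 := by
    rw [← ENNReal.ofReal_one]
    exact ENNReal.ofReal_lt_ofReal_iff_of_nonneg (by norm_num) |>.2 (by norm_num)
  exact tsub_pos_of_lt hlt
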